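/- For every compact set K ⊂ ℂ, the metric space (X(K), d_X) is separable. -/
import Mathlib


noncomputable section

open Set Filter Metric MeasureTheory
open scoped Classical

/-- A loop: a continuous `1`-periodic map `ℝ → ℂ`, viewed as a continuous map from the
circle `S¹ = ℝ/ℤ` to the complex plane. -/
structure Loop where
  toFun : ℝ → ℂ
  continuous_toFun : Continuous toFun
  periodic_toFun : Function.Periodic toFun 1

/-- Lifts of orientation-preserving homeomorphisms of the circle `ℝ/ℤ`: continuous strictly
increasing maps of `ℝ` commuting with translation by `1`. -/
def CircleMaps : Set (ℝ → ℝ) :=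
  {φ | Continuous φ ∧ StrictMono φ ∧ ∀ t, φ (t + 1) = φ t + 1}

/-- The supremum distance between loops, up to orientation-preserving reparametrization:
`d_Γ(γ, γ') = inf_{φ,ψ} sup_t |γ(φ t) - γ'(ψ t)|`. -/
def dGamma (γ γ' : Loop) : ℝ :=
  sInf {r : ℝ | 0 ≤ r ∧ ∃ φ ∈ CircleMaps, ∃ ψ ∈ CircleMaps,
    ∀ t : ℝ, dist (γ.toFun (φ t)) (γ'.toFun (ψ t)) ≤ r}

/-- Loops at `d_Γ`-distance zero are identified. -/
def loopRel (γ γ' : Loop) : Prop := dGamma γ γ' = 0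

/-- The space `Γ₀` of loop classes: loops modulo the relation `d_Γ = 0`. -/
def LoopClass : Type := Quot loopRel

/-- The class of a loop in `Γ₀`. -/
def Loop.cls (γ : Loop) : LoopClass := Quot.mk loopRel γ

namespace LoopClass

/-- The image of a loop class (all representatives have the same image). -/
def image (c : LoopClass) : Set ℂ := ⋃ γ ∈ {γ : Loop | γ.cls = c}, Set.range γ.toFun

/-- The diameter of a loop class. -/
def diam (c : LoopClass) : ℝ := Metric.diam c.image

/-- A loop class is trivial if its image is a single point. -/
def IsTrivial (c : LoopClass) : Prop := ∃ z : ℂ, c.image = {z}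

/-- A loop class is simple if it has an injective representative. -/
def IsSimple (c : LoopClass) : Prop :=
  ∃ γ : Loop, γ.cls = c ∧ ∀ s t : ℝ, s ∈ Set.Ico (0:ℝ) 1 → t ∈ Set.Ico (0:ℝ) 1 →
    γ.toFun s = γ.toFun t → s = t

/-- The induced distance `d_Γ` on loop classes. -/
def dist (c c' : LoopClass) : ℝ :=
  sInf {r : ℝ | ∃ γ γ' : Loop, γ.cls = c ∧ γ'.cls = c' ∧ dGamma γ γ' ≤ r}

end LoopClass

/-- The space `X(K)` of at most countable, locally finite collections of nontrivial loop
classes with images contained in `K`. -/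
def LoopCollections (K : Set ℂ) : Set (Set LoopClass) :=
  {F | F.Countable ∧ (∀ c ∈ F, ¬ c.IsTrivial ∧ c.image ⊆ K) ∧
    ∀ ε : ℝ, 0 < ε → {c ∈ F | ε < c.diam}.Finite}

/-- A partial matching between the collections `F` and `G`: a set of pairs in which every
element of `F` and every element of `G` occurs at most once. -/
def IsMatching (F G : Set LoopClass) (π : Set (LoopClass × LoopClass)) : Prop :=
  (∀ p ∈ π, p.1 ∈ F ∧ p.2 ∈ G) ∧
  (∀ p ∈ π, ∀ q ∈ π, p.1 = q.1 → p = q) ∧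
  (∀ p ∈ π, ∀ q ∈ π, p.2 = q.2 → p = q)

/-- The elements of `F` and `G` not matched by `π`. -/
def unmatched (F G : Set LoopClass) (π : Set (LoopClass × LoopClass)) : Set LoopClass :=
  {c ∈ F | ∀ p ∈ π, p.1 ≠ c} ∪ {c ∈ G | ∀ p ∈ π, p.2 ≠ c}

/-- The distance `d_X` between loop collections: the infimum over partial matchings of the
maximum of the matched `d_Γ`-distances and of half the diameters of unmatched loops. -/
def dX (F G : Set LoopClass) : ℝ :=
  sInf {r : ℝ | 0 ≤ r ∧ ∃ π : Set (LoopClass × LoopClass), IsMatching F G π ∧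
    (∀ p ∈ π, LoopClass.dist p.1 p.2 ≤ r) ∧
    ∀ c ∈ unmatched F G π, c.diam / 2 ≤ r}

/-- The space `X(K)`, as a type. -/
def XSpace (K : Set ℂ) : Type := {F : Set LoopClass // F ∈ LoopCollections K}

namespace XSpace

/-- The metric `d_X` on `X(K)`. -/
def dist {K : Set ℂ} (F G : XSpace K) : ℝ := dX F.1 G.1

/-- `d_X`-open subsets of `X(K)`. -/
def IsOpen {K : Set ℂ} (U : Set (XSpace K)) : Prop :=
  ∀ F ∈ U, ∃ ε : ℝ, 0 < ε ∧ ∀ G : XSpace K, XSpace.dist F G < ε → G ∈ U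

/-- The Borel σ-algebra of the metric space `(X(K), d_X)`. -/
instance measurableSpace {K : Set ℂ} : MeasurableSpace (XSpace K) :=
  MeasurableSpace.generateFrom {U | XSpace.IsOpen U}

/-- Bounded `d_X`-continuous real test functions on `X(K)`. -/
def IsBddContinuous {K : Set ℂ} (f : XSpace K → ℝ) : Prop :=
  (∃ M : ℝ, ∀ F, |f F| ≤ M) ∧
  ∀ F : XSpace K, ∀ ε : ℝ, 0 < ε → ∃ ρ : ℝ, 0 < ρ ∧
    ∀ G : XSpace K, XSpace.dist F G < ρ → |f G - f F| < ε

end XSpace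

/-- Weak convergence, as `δ → 0⁺`, of a `δ`-indexed family of Borel measures on
`(X(K), d_X)`: integrals of bounded `d_X`-continuous functions converge. -/
def WeakLimit {K : Set ℂ} (L : ℝ → Measure (XSpace K)) (μ : Measure (XSpace K)) : Prop :=
  ∀ f : XSpace K → ℝ, XSpace.IsBddContinuous f →
    Tendsto (fun δ : ℝ => ∫ F, f F ∂(L δ)) (nhdsWithin 0 (Set.Ioi 0))
      (nhds (∫ F, f F ∂μ))

/-- The Dirac mass at a loop collection (zero if the collection is not an element
of `X(K)`). -/
def diracAt (K : Set ℂ) (S : Set LoopClass) : Measure (XSpace K) :=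
  if h : S ∈ LoopCollections K then Measure.dirac (⟨S, h⟩ : XSpace K) else 0

namespace CircleMaps

theorem id_mem : (fun t : ℝ => t) ∈ CircleMaps :=
  ⟨continuous_id, strictMono_id, fun _ => rfl⟩

theorem comp_mem {φ ψ : ℝ → ℝ} (hφ : φ ∈ CircleMaps) (hψ : ψ ∈ CircleMaps) :
    (φ ∘ ψ) ∈ CircleMaps :=
  ⟨hφ.1.comp hψ.1, hφ.2.1.comp hψ.2.1, fun t => by
    simp only [Function.comp_apply, hψ.2.2 t, hφ.2.2 (ψ t)]⟩

theorem add_nat {φ : ℝ → ℝ} (hφ : φ ∈ CircleMaps) (t : ℝ) (n : ℕ) :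
    φ (t + n) = φ t + n := by
  induction n with
  | zero => simp
  | succ n ih =>
    have h : t + ((n : ℝ) + 1) = (t + n) + 1 := by ring
    push_cast
    rw [h, hφ.2.2, ih]
    ring

theorem sub_nat {φ : ℝ → ℝ} (hφ : φ ∈ CircleMaps) (t : ℝ) (n : ℕ) :
    φ (t - n) = φ t - n := by
  have h := add_nat hφ (t - n) n
  simp only [sub_add_cancel] at h
  linarith

theorem surjective {φ : ℝ → ℝ} (hφ : φ ∈ CircleMaps) : Function.Surjective φ := by
  intro y
  obtain ⟨n, hn⟩ := exists_nat_ge (y - φ 0)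
  obtain ⟨m, hm⟩ := exists_nat_ge (φ 0 - y)
  have h1 : φ (0 - m) ≤ y := by rw [sub_nat hφ 0 m]; linarith
  have h2 : y ≤ φ (0 + n) := by rw [add_nat hφ 0 n]; linarith
  have hle : (0:ℝ) - m ≤ 0 + n := by
    have : (0:ℝ) ≤ m := Nat.cast_nonneg m
    have : (0:ℝ) ≤ n := Nat.cast_nonneg n
    linarith
  have := intermediate_value_Icc hle (hφ.1.continuousOn)
  obtain ⟨x, _, hx⟩ := this ⟨h1, h2⟩
  exact ⟨x, hx⟩

/-- The inverse of a circle map is a circle map. -/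
theorem exists_inv {φ : ℝ → ℝ} (hφ : φ ∈ CircleMaps) :
    ∃ ψ ∈ CircleMaps, (∀ t, φ (ψ t) = t) ∧ ∀ t, ψ (φ t) = t := by
  set e : ℝ ≃o ℝ := StrictMono.orderIsoOfSurjective φ hφ.2.1 (surjective hφ) with he
  have heφ : (e : ℝ → ℝ) = φ := StrictMono.coe_orderIsoOfSurjective φ hφ.2.1 (surjective hφ)
  refine ⟨(e.symm : ℝ → ℝ), ⟨?_, ?_, ?_⟩, ?_, ?_⟩
  · exact e.symm.continuous
  · exact e.symm.strictMono
  · intro t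
    apply e.injective
    have h1 : e (e.symm (t + 1)) = t + 1 := e.apply_symm_apply _
    have h2 : e (e.symm t + 1) = t + 1 := by
      rw [show (e : ℝ → ℝ) (e.symm t + 1) = φ (e.symm t + 1) from congrFun heφ _,
        hφ.2.2, show φ (e.symm t) = e (e.symm t) from (congrFun heφ _).symm,
        e.apply_symm_apply]
    rw [h1, h2]
  · intro t
    have := e.apply_symm_apply t
    rwa [show e (e.symm t) = φ (e.symm t) from congrFun heφ _] at this
  · intro t
    have := e.symm_apply_apply t
    rwa [show e t = φ t from congrFun heφ _] at this

end CircleMaps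

namespace Loop

theorem fract_eq (γ : Loop) (t : ℝ) : γ.toFun (Int.fract t) = γ.toFun t := by
  have h := γ.periodic_toFun.sub_int_mul_eq (n := ⌊t⌋) (x := t)
  rw [mul_one] at h
  rw [Int.fract]
  exact h

theorem range_eq_image (γ : Loop) : Set.range γ.toFun = γ.toFun '' Set.Icc (0:ℝ) 1 := by
  apply Set.Subset.antisymm
  · rintro x ⟨t, rfl⟩
    exact ⟨Int.fract t, ⟨Int.fract_nonneg t, (Int.fract_lt_one t).le⟩, γ.fract_eq t⟩
  · rintro x ⟨t, _, rfl⟩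
    exact ⟨t, rfl⟩

theorem isCompact_range (γ : Loop) : IsCompact (Set.range γ.toFun) := by
  rw [γ.range_eq_image]
  exact isCompact_Icc.image γ.continuous_toFun

theorem exists_bound (γ γ' : Loop) : ∃ r : ℝ, 0 ≤ r ∧ ∀ t, dist (γ.toFun t) (γ'.toFun t) ≤ r := by
  obtain ⟨R, hR⟩ := γ.isCompact_range.isBounded.subset_closedBall 0
  obtain ⟨R', hR'⟩ := γ'.isCompact_range.isBounded.subset_closedBall 0
  refine ⟨|R| + |R'|, by positivity, fun t => ?_⟩
  have h1 : dist (γ.toFun t) 0 ≤ R := hR ⟨t, rfl⟩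
  have h2 : dist (γ'.toFun t) 0 ≤ R' := hR' ⟨t, rfl⟩
  calc dist (γ.toFun t) (γ'.toFun t) ≤ dist (γ.toFun t) 0 + dist (γ'.toFun t) 0 :=
        dist_triangle_right _ _ _
    _ ≤ |R| + |R'| := add_le_add (h1.trans (le_abs_self R)) (h2.trans (le_abs_self R'))

end Loop

section DGamma

/-- The defining set for `dGamma`. -/
def DSet (γ γ' : Loop) : Set ℝ :=
  {r : ℝ | 0 ≤ r ∧ ∃ φ ∈ CircleMaps, ∃ ψ ∈ CircleMaps,
    ∀ t : ℝ, dist (γ.toFun (φ t)) (γ'.toFun (ψ t)) ≤ r}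

theorem dGamma_eq_sInf (γ γ' : Loop) : dGamma γ γ' = sInf (DSet γ γ') := rfl

theorem DSet.nonempty (γ γ' : Loop) : (DSet γ γ').Nonempty := by
  obtain ⟨r, hr0, hr⟩ := γ.exists_bound γ'
  exact ⟨r, hr0, _, CircleMaps.id_mem, _, CircleMaps.id_mem, hr⟩

theorem DSet.bddBelow (γ γ' : Loop) : BddBelow (DSet γ γ') :=
  ⟨0, fun _ hr => hr.1⟩

theorem dGamma_nonneg (γ γ' : Loop) : 0 ≤ dGamma γ γ' :=
  le_csInf (DSet.nonempty γ γ') fun _ hr => hr.1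

theorem dGamma_le_of_mem {γ γ' : Loop} {r : ℝ} (h : r ∈ DSet γ γ') : dGamma γ γ' ≤ r :=
  csInf_le (DSet.bddBelow γ γ') h

theorem dGamma_le_of_bound {γ γ' : Loop} {r : ℝ} (h0 : 0 ≤ r)
    (h : ∀ t, dist (γ.toFun t) (γ'.toFun t) ≤ r) : dGamma γ γ' ≤ r :=
  dGamma_le_of_mem ⟨h0, _, CircleMaps.id_mem, _, CircleMaps.id_mem, h⟩

theorem exists_mem_DSet_lt {γ γ' : Loop} {r : ℝ} (h : dGamma γ γ' < r) :
    ∃ s ∈ DSet γ γ', s < r :=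
  (csInf_lt_iff (DSet.bddBelow γ γ') (DSet.nonempty γ γ')).mp h

theorem dGamma_self (γ : Loop) : dGamma γ γ = 0 :=
  le_antisymm (dGamma_le_of_bound le_rfl fun t => by simp) (dGamma_nonneg γ γ)

theorem dGamma_comm (γ γ' : Loop) : dGamma γ γ' = dGamma γ' γ := by
  have hs : ∀ γ₁ γ₂ : Loop, DSet γ₁ γ₂ ⊆ DSet γ₂ γ₁ := by
    rintro γ₁ γ₂ r ⟨hr0, φ, hφ, ψ, hψ, h⟩
    exact ⟨hr0, ψ, hψ, φ, hφ, fun t => by rw [dist_comm]; exact h t⟩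
  rw [dGamma_eq_sInf, dGamma_eq_sInf,
    Set.Subset.antisymm (hs γ γ') (hs γ' γ)]

theorem dGamma_triangle (γ₁ γ₂ γ₃ : Loop) :
    dGamma γ₁ γ₃ ≤ dGamma γ₁ γ₂ + dGamma γ₂ γ₃ := by
  refine le_of_forall_pos_le_add fun η hη => ?_
  obtain ⟨r₁, hr₁, hr₁lt⟩ := exists_mem_DSet_lt
    (show dGamma γ₁ γ₂ < dGamma γ₁ γ₂ + η / 2 by linarith)
  obtain ⟨r₂, hr₂, hr₂lt⟩ := exists_mem_DSet_lt
    (show dGamma γ₂ γ₃ < dGamma γ₂ γ₃ + η / 2 by linarith)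
  obtain ⟨hr₁0, φ₁, hφ₁, ψ₁, hψ₁, h₁⟩ := hr₁
  obtain ⟨hr₂0, φ₂, hφ₂, ψ₂, hψ₂, h₂⟩ := hr₂
  obtain ⟨ψ₁inv, hψ₁inv, hinv1, hinv2⟩ := CircleMaps.exists_inv hψ₁
  have key : dGamma γ₁ γ₃ ≤ r₁ + r₂ := by
    apply dGamma_le_of_mem
    refine ⟨by linarith, φ₁ ∘ (ψ₁inv ∘ φ₂),
      CircleMaps.comp_mem hφ₁ (CircleMaps.comp_mem hψ₁inv hφ₂), ψ₂, hψ₂, fun t => ?_⟩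
    have hmid : ψ₁ (ψ₁inv (φ₂ t)) = φ₂ t := hinv1 _
    calc dist (γ₁.toFun (φ₁ (ψ₁inv (φ₂ t)))) (γ₃.toFun (ψ₂ t))
        ≤ dist (γ₁.toFun (φ₁ (ψ₁inv (φ₂ t)))) (γ₂.toFun (ψ₁ (ψ₁inv (φ₂ t)))) +
          dist (γ₂.toFun (ψ₁ (ψ₁inv (φ₂ t)))) (γ₃.toFun (ψ₂ t)) := dist_triangle _ _ _
      _ ≤ r₁ + r₂ := by
          refine add_le_add (h₁ _) ?_
          rw [hmid]
          exact h₂ t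
  linarith

end DGamma
section Classes

theorem dGamma_eq_zero_of_eqvGen {γ γ' : Loop} (h : Relation.EqvGen loopRel γ γ') :
    dGamma γ γ' = 0 := by
  induction h with
  | rel x y h => exact h
  | refl x => exact dGamma_self x
  | symm x y h ih => rw [dGamma_comm]; exact ih
  | trans x y z h1 h2 ih1 ih2 =>
      refine le_antisymm ?_ (dGamma_nonneg _ _)
      calc dGamma x z ≤ dGamma x y + dGamma y z := dGamma_triangle _ _ _
        _ = 0 := by rw [ih1, ih2, add_zero]

theorem cls_eq_iff {γ γ' : Loop} : γ.cls = γ'.cls ↔ dGamma γ γ' = 0 :=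
  ⟨fun h => dGamma_eq_zero_of_eqvGen (Quot.eqvGen_exact h), fun h => by
    unfold Loop.cls
    exact Quot.sound h⟩

theorem exists_cls_rep (c : LoopClass) : ∃ γ : Loop, γ.cls = c :=
  Quot.exists_rep c

theorem range_subset_of_dGamma_eq_zero {γ γ' : Loop} (h : dGamma γ γ' = 0) :
    Set.range γ.toFun ⊆ Set.range γ'.toFun := by
  rintro x ⟨s, rfl⟩
  have hcl : IsClosed (Set.range γ'.toFun) := γ'.isCompact_range.isClosed
  rw [← hcl.closure_eq, Metric.mem_closure_iff]
  intro η hη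
  obtain ⟨r, ⟨hr0, φ, hφ, ψ, hψ, hb⟩, hrlt⟩ :=
    exists_mem_DSet_lt (show dGamma γ γ' < η from h ▸ hη)
  obtain ⟨t, ht⟩ := CircleMaps.surjective hφ s
  exact ⟨γ'.toFun (ψ t), ⟨ψ t, rfl⟩, by rw [← ht]; exact (hb t).trans_lt hrlt⟩

theorem range_eq_of_cls_eq {γ γ' : Loop} (h : γ.cls = γ'.cls) :
    Set.range γ.toFun = Set.range γ'.toFun := by
  have h0 := cls_eq_iff.mp h
  exact Set.Subset.antisymm (range_subset_of_dGamma_eq_zero h0)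
    (range_subset_of_dGamma_eq_zero (by rwa [dGamma_comm] at h0))

theorem image_cls (γ : Loop) : (γ.cls).image = Set.range γ.toFun := by
  unfold LoopClass.image
  apply Set.Subset.antisymm
  · intro x hx
    simp only [Set.mem_iUnion] at hx
    obtain ⟨γ', hγ', hx⟩ := hx
    rwa [range_eq_of_cls_eq (hγ' : γ'.cls = γ.cls)] at hx
  · intro x hx
    simp only [Set.mem_iUnion]
    exact ⟨γ, rfl, hx⟩

theorem diam_cls (γ : Loop) : (γ.cls).diam = Metric.diam (Set.range γ.toFun) := by
  rw [LoopClass.diam, image_cls]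

theorem LoopClass.dist_le {c c' : LoopClass} {γ γ' : Loop} (h : γ.cls = c)
    (h' : γ'.cls = c') {r : ℝ} (hr : dGamma γ γ' ≤ r) : LoopClass.dist c c' ≤ r :=
  csInf_le ⟨0, fun _ ⟨a, b, _, _, hs⟩ => (dGamma_nonneg a b).trans hs⟩ ⟨γ, γ', h, h', hr⟩

end Classes
instance : Inhabited Loop := ⟨⟨fun _ => 0, continuous_const, fun _ => rfl⟩⟩

/-- A countable family of loops with range in `K`, uniformly dense among such loops. -/
theorem exists_countable_loop_approx (K : Set ℂ) :
    ∃ D : Set Loop, D.Countable ∧ (∀ β ∈ D, Set.range β.toFun ⊆ K) ∧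
      ∀ γ : Loop, Set.range γ.toFun ⊆ K → ∀ δ : ℝ, 0 < δ →
        ∃ β ∈ D, ∀ t, dist (γ.toFun t) (β.toFun t) ≤ δ := by
  classical
  let A := {f : C(ℝ, ℂ) // Function.Periodic ⇑f 1 ∧ Set.range ⇑f ⊆ K}
  haveI hsc : SecondCountableTopology C(ℝ, ℂ) :=
    ContinuousMap.instSecondCountableTopology
  haveI hscA : SecondCountableTopology A :=
    TopologicalSpace.Subtype.secondCountableTopology _
  haveI : TopologicalSpace.SeparableSpace A :=
    TopologicalSpace.SecondCountableTopology.to_separableSpace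
  obtain ⟨D₀, hD₀c, hD₀d⟩ := TopologicalSpace.exists_countable_dense A
  refine ⟨(fun a : A => (⟨a.1, a.1.continuous, a.2.1⟩ : Loop)) '' D₀, hD₀c.image _,
    ?_, ?_⟩
  · rintro β ⟨a, _, rfl⟩
    exact a.2.2
  · intro γ hγK δ hδ
    set f : C(ℝ, ℂ) := ⟨γ.toFun, γ.continuous_toFun⟩ with hf
    have ha2 : Function.Periodic ⇑f 1 ∧ Set.range ⇑f ⊆ K := ⟨γ.periodic_toFun, hγK⟩
    set a : A := ⟨f, ha2⟩ with haa
    set V : Set (ℂ × ℂ) := {p | dist p.1 p.2 < δ} with hV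
    set E : Set (C(ℝ, ℂ) × C(ℝ, ℂ)) :=
      {fg | ∀ x ∈ Set.Icc (0:ℝ) 1, (fg.1 x, fg.2 x) ∈ V} with hE
    have hEmem : E ∈ uniformity C(ℝ, ℂ) :=
      ContinuousMap.hasBasis_compactConvergenceUniformity.mem_of_mem
        (i := (Set.Icc (0:ℝ) 1, V)) ⟨isCompact_Icc, dist_mem_uniformity hδ⟩
    have hU : UniformSpace.ball f E ∈ nhds f := UniformSpace.ball_mem_nhds f hEmem
    have hUA : (Subtype.val ⁻¹' UniformSpace.ball f E : Set A) ∈ nhds a :=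
      continuous_subtype_val.continuousAt.preimage_mem_nhds hU
    obtain ⟨b, hbU, hbD⟩ := (mem_closure_iff_nhds.mp (hD₀d a)) _ hUA
    refine ⟨⟨b.1, b.1.continuous, b.2.1⟩, ⟨b, hbD, rfl⟩, fun t => ?_⟩
    have hb : ∀ x ∈ Set.Icc (0:ℝ) 1, dist (f x) (b.1 x) < δ := hbU
    set β : Loop := ⟨b.1, b.1.continuous, b.2.1⟩ with hβ
    have h1 : γ.toFun t = γ.toFun (Int.fract t) := (γ.fract_eq t).symm
    have h2 : β.toFun t = β.toFun (Int.fract t) := (β.fract_eq t).symm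
    rw [h1, h2]
    exact (hb (Int.fract t)
      ⟨Int.fract_nonneg t, (Int.fract_lt_one t).le⟩).le

theorem finset_exists_pos_le {α : Type*} (s : Finset α) (f : α → ℝ)
    (h : ∀ a ∈ s, 0 < f a) : ∃ δ : ℝ, 0 < δ ∧ ∀ a ∈ s, δ ≤ f a := by
  by_cases hs : s.Nonempty
  · obtain ⟨a, ha, hmin⟩ := s.exists_min_image f hs
    exact ⟨f a, h a ha, fun b hb => hmin b hb⟩
  · rw [Finset.not_nonempty_iff_eq_empty] at hs
    subst hs
    exact ⟨1, one_pos, by simp⟩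
/-- For every compact `K ⊂ ℂ`, the metric space `(X(K), d_X)` is
separable. -/
theorem dX_separable (K : Set ℂ) (hK : IsCompact K) :
    ∃ S : Set (XSpace K), S.Countable ∧
      ∀ F : XSpace K, ∀ ε : ℝ, 0 < ε → ∃ G ∈ S, XSpace.dist F G < ε := by
  classical
  obtain ⟨D, hDc, hDK, hDapprox⟩ := exists_countable_loop_approx K
  set Dcls : Set LoopClass := (fun β : Loop => β.cls) '' D with hDcls
  have hDclsc : Dcls.Countable := hDc.image _
  set S : Set (XSpace K) :=
    (fun G : XSpace K => G.1) ⁻¹' {t : Set LoopClass | t.Finite ∧ t ⊆ Dcls} with hS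
  have hScount : S.Countable :=
    (countable_setOf_finite_subset hDclsc).preimage Subtype.val_injective
  refine ⟨S, hScount, ?_⟩
  intro F ε hε
  have hF'fin : {c ∈ F.1 | ε < c.diam}.Finite := F.2.2.2 ε hε
  have hbdd : ∀ (Gs : Set LoopClass), BddBelow {r : ℝ | 0 ≤ r ∧
      ∃ π : Set (LoopClass × LoopClass), IsMatching F.1 Gs π ∧
      (∀ p ∈ π, LoopClass.dist p.1 p.2 ≤ r) ∧
      ∀ c ∈ unmatched F.1 Gs π, c.diam / 2 ≤ r} :=
    fun Gs => ⟨0, fun _ hr => hr.1⟩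
  by_cases hne : {c ∈ F.1 | ε < c.diam}.Nonempty
  · -- main case
    choose rep hrep using exists_cls_rep
    have hrange : ∀ c ∈ F.1, Set.range (rep c).toFun ⊆ K := by
      intro c hc
      have h := (F.2.2.1 c hc).2
      rw [← hrep c, image_cls] at h
      exact h
    set Φ : Finset LoopClass := hF'fin.toFinset with hΦ
    have hpos : ∀ p ∈ (Φ ×ˢ Φ).filter (fun p : LoopClass × LoopClass => p.1 ≠ p.2),
        0 < dGamma (rep p.1) (rep p.2) := by
      intro p hp
      rw [Finset.mem_filter] at hp
      refine lt_of_le_of_ne (dGamma_nonneg _ _) fun h0 => ?_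
      have hcl : (rep p.1).cls = (rep p.2).cls := cls_eq_iff.mpr h0.symm
      rw [hrep p.1, hrep p.2] at hcl
      exact hp.2 hcl
    obtain ⟨δ₀, hδ₀, hδ₀le⟩ := finset_exists_pos_le _ _ hpos
    set δ : ℝ := min (ε / 2) (δ₀ / 3) with hδdef
    have hδpos : 0 < δ := lt_min (by linarith) (by linarith)
    have hδε : δ ≤ ε / 2 := min_le_left _ _
    have hδ₀3 : δ ≤ δ₀ / 3 := min_le_right _ _
    have happrox : ∀ c ∈ {c ∈ F.1 | ε < c.diam},
        ∃ β ∈ D, ∀ t, dist ((rep c).toFun t) (β.toFun t) ≤ δ :=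
      fun c hc => hDapprox (rep c) (hrange c hc.1) δ hδpos
    choose! β hβD hβdist using happrox
    -- injectivity of the approximating classes
    have hinj : ∀ c ∈ {c ∈ F.1 | ε < c.diam}, ∀ c' ∈ {c ∈ F.1 | ε < c.diam},
        (β c).cls = (β c').cls → c = c' := by
      intro c hc c' hc' h
      by_contra hne'
      have h0 : dGamma (β c) (β c') = 0 := cls_eq_iff.mp h
      have e1 : dGamma (rep c) (β c) ≤ δ := dGamma_le_of_bound hδpos.le (hβdist c hc)
      have e2 : dGamma (rep c') (β c') ≤ δ := dGamma_le_of_bound hδpos.le (hβdist c' hc')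
      have e3 : dGamma (β c') (rep c') ≤ δ := by rwa [dGamma_comm]
      have key : dGamma (rep c) (rep c') ≤ 2 * δ := by
        calc dGamma (rep c) (rep c')
            ≤ dGamma (rep c) (β c) + dGamma (β c) (rep c') := dGamma_triangle _ _ _
          _ ≤ δ + (dGamma (β c) (β c') + dGamma (β c') (rep c')) :=
              add_le_add e1 (dGamma_triangle _ _ _)
          _ ≤ δ + (0 + δ) := by
              rw [h0]
              exact add_le_add le_rfl (add_le_add le_rfl e3)
          _ = 2 * δ := by ring
      have hp : (c, c') ∈ (Φ ×ˢ Φ).filter (fun p : LoopClass × LoopClass => p.1 ≠ p.2) := by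
        rw [Finset.mem_filter, Finset.mem_product]
        exact ⟨⟨hF'fin.mem_toFinset.mpr hc, hF'fin.mem_toFinset.mpr hc'⟩, hne'⟩
      have := hδ₀le (c, c') hp
      simp only at this
      linarith
    set Gset : Set LoopClass := (fun c => (β c).cls) '' {c ∈ F.1 | ε < c.diam} with hGset
    have hGfin : Gset.Finite := hF'fin.image _
    have hGsub : Gset ⊆ Dcls := by
      rintro d ⟨c, hc, rfl⟩
      exact ⟨β c, hβD c hc, rfl⟩
    have hGprops : ∀ d ∈ Gset, ¬ d.IsTrivial ∧ d.image ⊆ K := by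
      rintro d ⟨c, hc, rfl⟩
      constructor
      · rintro ⟨z, hz⟩
        rw [image_cls] at hz
        have hβz : ∀ t, (β c).toFun t = z := by
          intro t
          have ht : (β c).toFun t ∈ Set.range (β c).toFun := ⟨t, rfl⟩
          rw [hz] at ht
          exact ht
        have hdz : ∀ t, dist ((rep c).toFun t) z ≤ δ := by
          intro t
          have := hβdist c hc t
          rwa [hβz t] at this
        have hdiam : Metric.diam (Set.range (rep c).toFun) ≤ 2 * δ := by
          apply Metric.diam_le_of_forall_dist_le (by linarith)
          rintro x ⟨s, rfl⟩ y ⟨t, rfl⟩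
          calc dist ((rep c).toFun s) ((rep c).toFun t)
              ≤ dist ((rep c).toFun s) z + dist ((rep c).toFun t) z :=
                dist_triangle_right _ _ _
            _ ≤ δ + δ := add_le_add (hdz s) (hdz t)
            _ = 2 * δ := by ring
        have hd : c.diam ≤ 2 * δ := by
          have h1 := diam_cls (rep c)
          rw [hrep c] at h1
          rw [h1]
          exact hdiam
        have : ε < c.diam := hc.2
        linarith
      · rw [image_cls]
        exact hDK _ (hβD c hc)
    have hGmem : Gset ∈ LoopCollections K :=
      ⟨hGfin.countable, hGprops, fun ε' _ => hGfin.subset fun c hc => hc.1⟩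
    refine ⟨⟨Gset, hGmem⟩, ⟨hGfin, hGsub⟩, ?_⟩
    set π : Set (LoopClass × LoopClass) :=
      (fun c => (c, (β c).cls)) '' {c ∈ F.1 | ε < c.diam} with hπ
    have hmatch : IsMatching F.1 Gset π := by
      refine ⟨?_, ?_, ?_⟩
      · rintro p ⟨c, hc, rfl⟩
        exact ⟨hc.1, ⟨c, hc, rfl⟩⟩
      · rintro p ⟨c, hc, rfl⟩ q ⟨c', hc', rfl⟩ h
        simp only at h
        rw [h]
      · rintro p ⟨c, hc, rfl⟩ q ⟨c', hc', rfl⟩ h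
        simp only at h
        rw [hinj c hc c' hc' h]
    have hdX : XSpace.dist F ⟨Gset, hGmem⟩ ≤ ε / 2 := by
      apply csInf_le (hbdd Gset)
      refine ⟨by linarith, π, hmatch, ?_, ?_⟩
      · rintro p ⟨c, hc, rfl⟩
        exact LoopClass.dist_le (hrep c) rfl
          ((dGamma_le_of_bound hδpos.le (hβdist c hc)).trans hδε)
      · rintro c (⟨hcF, hcnm⟩ | ⟨hcG, hcnm⟩)
        · have hcd : ¬ ε < c.diam := fun h =>
            hcnm (c, (β c).cls) ⟨c, ⟨hcF, h⟩, rfl⟩ rfl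
          push_neg at hcd
          linarith
        · obtain ⟨c', hc', rfl⟩ := hcG
          exact absurd rfl (hcnm (c', (β c').cls) ⟨c', hc', rfl⟩)
    exact hdX.trans_lt (by linarith)
  · -- all loops of F are small
    have hGmem : (∅ : Set LoopClass) ∈ LoopCollections K :=
      ⟨Set.countable_empty, fun c hc => absurd hc (Set.notMem_empty c),
        fun _ _ => Set.finite_empty.subset fun _ hc => hc.1⟩
    refine ⟨⟨∅, hGmem⟩, ⟨Set.finite_empty, Set.empty_subset _⟩, ?_⟩
    have hmatch : IsMatching F.1 ∅ (∅ : Set (LoopClass × LoopClass)) :=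
      ⟨fun p hp => absurd hp (Set.notMem_empty p),
        fun p hp => absurd hp (Set.notMem_empty p),
        fun p hp => absurd hp (Set.notMem_empty p)⟩
    have hsmall : ∀ c ∈ F.1, c.diam ≤ ε := fun c hc =>
      le_of_not_gt fun h => hne ⟨c, hc, h⟩
    have hdX : XSpace.dist F ⟨∅, hGmem⟩ ≤ ε / 2 := by
      apply csInf_le (hbdd ∅)
      refine ⟨by linarith, ∅, hmatch, fun p hp => absurd hp (Set.notMem_empty p), ?_⟩
      rintro c (⟨hcF, _⟩ | ⟨hcG, _⟩)
      · have := hsmall c hcF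
        linarith
      · exact absurd hcG (Set.notMem_empty c)
    exact hdX.trans_lt (by linarith)
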